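/- Let C₁,…,C_m be the clauses of a CNF formula over variables x₁,…,xₙ. Define the Kripke structure W=(S,R,π) over atomic propositions r₁,…,rₙ,p₁,…,pₙ by: S={c_i | i≤m} ∪ {u_{j,k}, ū_{j,k} | j,k∈{1,…,n}} ∪ {t_k, t̄_k | k∈{1,…,n}}; R contains (c_i,u_{j,1}) iff x_j occurs positively in C_i and (c_i,ū_{j,1}) iff x_j occurs negatively in C_i; for k<n, R contains (u_{j,k},u_{j,k+1}) and (ū_{j,k},ū_{j,k+1}); for all j,k, R contains (u_{j,k},t_k) and (ū_{j,k},t̄_k), and additionally (u_{j,k},t̄_k) and (ū_{j,k},t_k) whenever j≠k; π(t_k)={r_k,p_k}, π(t̄_k)={r_k}, and π(s)=∅ for all other states s. Then the CNF formula C₁∧…∧C_m is satisfiable if and only if W,{c₁,…,c_m} ⊨ ◇(⋀_{j=1}^{n} ◇^j (r_j ∧ dep(;p_j))), where ◇^j denotes j nested ◇ operators and dep(;p_j) the 0-ary dependence atom. -/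

import Mathlib

/-- Syntax of modal dependence logic (MDL) over atomic propositions `AP`. -/
inductive MDL (AP : Type) : Type where
  | top   : MDL AP                       -- ⊤
  | bot   : MDL AP                       -- ⊥
  | atom  : AP → MDL AP                  -- p
  | natom : AP → MDL AP                  -- ¬p
  | dep   : List AP → AP → MDL AP        -- dep(p₁,…,pₙ;q)
  | ndep  : List AP → AP → MDL AP        -- ¬dep(p₁,…,pₙ;q)
  | and   : MDL AP → MDL AP → MDL AP     -- ∧
  | dor   : MDL AP → MDL AP → MDL AP     -- dependence disjunction ∨
  | cor   : MDL AP → MDL AP → MDL AP     -- classical disjunction ⊻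
  | box   : MDL AP → MDL AP              -- □
  | dia   : MDL AP → MDL AP              -- ◇

/-- Team semantics of MDL over a Kripke structure `(S, R, π)`. -/
def MDL.sat {S AP : Type} (R : S → S → Prop) (π : S → Set AP) :
    MDL AP → Set S → Prop
  | .top, _ => True
  | .bot, T => T = ∅
  | .atom p, T => ∀ s ∈ T, p ∈ π s
  | .natom p, T => ∀ s ∈ T, p ∉ π s
  | .dep ps q, T => ∀ s₁ ∈ T, ∀ s₂ ∈ T,
      (∀ p ∈ ps, (p ∈ π s₁ ↔ p ∈ π s₂)) → (q ∈ π s₁ ↔ q ∈ π s₂)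
  | .ndep _ _, T => T = ∅
  | .and φ ψ, T => MDL.sat R π φ T ∧ MDL.sat R π ψ T
  | .dor φ ψ, T => ∃ T₁ T₂ : Set S, T = T₁ ∪ T₂ ∧ MDL.sat R π φ T₁ ∧ MDL.sat R π ψ T₂
  | .cor φ ψ, T => MDL.sat R π φ T ∨ MDL.sat R π ψ T
  | .box φ, T => MDL.sat R π φ {s' | ∃ s ∈ T, R s s'}
  | .dia φ, T => ∃ T' : Set S, MDL.sat R π φ T' ∧ ∀ s ∈ T, ∃ s' ∈ T', R s s'

/-- Big dependence disjunction ⋁ of a list of formulas (empty disjunction is ⊥). -/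
def MDL.bigDor {AP : Type} : List (MDL AP) → MDL AP
  | [] => .bot
  | [φ] => φ
  | φ :: ψ :: rest => .dor φ (MDL.bigDor (ψ :: rest))

/-- Big conjunction ⋀ of a list of formulas (empty conjunction is ⊤). -/
def MDL.bigAnd {AP : Type} : List (MDL AP) → MDL AP
  | [] => .top
  | [φ] => φ
  | φ :: ψ :: rest => .and φ (MDL.bigAnd (ψ :: rest))

/-- `◇^k φ` : `k` nested ◇ operators. -/
def MDL.diaIter {AP : Type} : ℕ → MDL AP → MDL AP
  | 0, φ => φ
  | n + 1, φ => .dia (MDL.diaIter n φ)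

/-- `□^k φ` : `k` nested □ operators. -/
def MDL.boxIter {AP : Type} : ℕ → MDL AP → MDL AP
  | 0, φ => φ
  | n + 1, φ => .box (MDL.boxIter n φ)

/-- A CNF formula with `m` clauses over `n` variables: `C i j = some true` iff
variable `x_j` occurs positively in clause `C_i`, `some false` iff it occurs
negatively, `none` iff it does not occur (each variable occurs at most once
per clause). -/
def CNF.Satisfiable {m n : ℕ} (C : Fin m → Fin n → Option Bool) : Prop :=
  ∃ θ : Fin n → Bool, ∀ i : Fin m, ∃ j : Fin n, C i j = some (θ j)

section Stmt3Aux

theorem MDL.bigAnd_sat {S AP : Type} (R : S → S → Prop) (π : S → Set AP) :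
    ∀ (L : List (MDL AP)) (T : Set S),
      MDL.sat R π (MDL.bigAnd L) T ↔ ∀ φ ∈ L, MDL.sat R π φ T
  | [], T => by simp [MDL.bigAnd, MDL.sat]
  | [φ], T => by simp [MDL.bigAnd]
  | φ :: ψ :: L, T => by
      rw [show MDL.bigAnd (φ :: ψ :: L) = .and φ (MDL.bigAnd (ψ :: L)) from rfl]
      rw [show MDL.sat R π (.and φ (MDL.bigAnd (ψ :: L))) T ↔
        (MDL.sat R π φ T ∧ MDL.sat R π (MDL.bigAnd (ψ :: L)) T) from Iff.rfl]
      rw [MDL.bigAnd_sat R π (ψ :: L) T]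
      simp

namespace Stmt3

variable (m n : ℕ) (C : Fin m → Fin n → Option Bool)

abbrev S : Type := Fin m ⊕ ((Fin n × Fin n × Bool) ⊕ (Fin n × Bool))

def R : S m n → S m n → Prop := fun s s' =>
  match s, s' with
  | Sum.inl _, Sum.inl _ => False
  | Sum.inl i, Sum.inr (Sum.inl (j, k, b)) => (k : ℕ) = 0 ∧ C i j = some b
  | Sum.inl _, Sum.inr (Sum.inr _) => False
  | Sum.inr (Sum.inl _), Sum.inl _ => False
  | Sum.inr (Sum.inl (j, k, b)), Sum.inr (Sum.inl (j', k', b')) =>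
      j = j' ∧ b = b' ∧ (k' : ℕ) = (k : ℕ) + 1
  | Sum.inr (Sum.inl (j, k, b)), Sum.inr (Sum.inr (k', b')) =>
      k = k' ∧ (b = b' ∨ j ≠ k)
  | Sum.inr (Sum.inr _), _ => False

def pi : S m n → Set (Fin n ⊕ Fin n) := fun s =>
  {a : Fin n ⊕ Fin n |
    match s with
    | Sum.inr (Sum.inr (k, true)) => a = Sum.inl k ∨ a = Sum.inr k
    | Sum.inr (Sum.inr (k, false)) => a = Sum.inl k
    | Sum.inl _ => False
    | Sum.inr (Sum.inl _) => False}

def psi (j : Fin n) : MDL (Fin n ⊕ Fin n) :=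
  .and (.atom (Sum.inl j)) (.dep [] (Sum.inr j))

def lev (θ : Fin n → Bool) (l : Fin n) : Set (S m n) :=
  Set.range fun j' : Fin n => Sum.inr (Sum.inl (j', l, θ j'))

theorem fwd_chain (θ : Fin n → Bool) (j : Fin n) :
    ∀ (k : ℕ) (l : Fin n), (l : ℕ) + k = (j : ℕ) →
      MDL.sat (R m n C) (pi m n) (MDL.diaIter (k + 1) (psi n j)) (lev m n θ l) := by
  intro k
  induction k with
  | zero =>
    intro l hl
    have hlj : l = j := Fin.ext (by simpa using hl)
    subst hlj
    refine ⟨{Sum.inr (Sum.inr (l, θ l))}, ⟨?_, ?_⟩, ?_⟩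
    · intro s hs
      rw [Set.mem_singleton_iff] at hs
      subst hs
      cases h : θ l <;> simp [pi, h]
    · intro s₁ h₁ s₂ h₂ _
      rw [Set.mem_singleton_iff] at h₁ h₂
      subst h₁; subst h₂; exact Iff.rfl
    · rintro s ⟨j', rfl⟩
      refine ⟨Sum.inr (Sum.inr (l, θ l)), rfl, rfl, ?_⟩
      by_cases h : j' = l
      · subst h; exact Or.inl rfl
      · exact Or.inr h
  | succ k ih =>
    intro l hl
    have hlt : (l : ℕ) + 1 < n := by have := j.isLt; omega
    refine ⟨lev m n θ ⟨(l : ℕ) + 1, hlt⟩, ih ⟨(l : ℕ) + 1, hlt⟩ (by simp; omega), ?_⟩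
    rintro s ⟨j', rfl⟩
    exact ⟨Sum.inr (Sum.inl (j', ⟨(l : ℕ) + 1, hlt⟩, θ j')), ⟨j', rfl⟩, rfl, rfl, rfl⟩

theorem bwd_chain (j : Fin n) :
    ∀ (k : ℕ) (T : Set (S m n)),
      MDL.sat (R m n C) (pi m n) (MDL.diaIter k (psi n j)) T →
      ∃ F, MDL.sat (R m n C) (pi m n) (psi n j) F ∧
        (∀ (l : Fin n) (b : Bool), Sum.inr (Sum.inl (j, l, b)) ∈ T →
          (l : ℕ) + k = (j : ℕ) + 1 → Sum.inr (Sum.inr (j, b)) ∈ F) ∧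
        (∀ b : Bool, k = 0 → Sum.inr (Sum.inr (j, b)) ∈ T →
          Sum.inr (Sum.inr (j, b)) ∈ F) := by
  intro k
  induction k with
  | zero =>
    intro T hT
    refine ⟨T, hT, ?_, fun b _ h => h⟩
    intro l b hmem hl
    exfalso
    have h := hT.1 _ hmem
    simp [pi] at h
  | succ k ih =>
    intro T hT
    obtain ⟨T₁, h₁, hs⟩ := hT
    obtain ⟨F, hF, hmap, hmem⟩ := ih T₁ h₁
    refine ⟨F, hF, ?_, fun b h _ => (Nat.succ_ne_zero k h).elim⟩
    intro l b hmemT hl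
    obtain ⟨s', hs'₁, hR⟩ := hs _ hmemT
    rcases s' with i | ⟨j', l', b'⟩ | ⟨k', b'⟩
    · exact hR.elim
    · obtain ⟨hj, hb, hl'⟩ := hR
      subst hj; subst hb
      exact hmap l' b hs'₁ (by omega)
    · obtain ⟨hk', hor⟩ := hR
      subst hk'
      cases k with
      | zero =>
        have hlj : l = j := Fin.ext (by omega)
        subst hlj
        have hbb : b = b' := hor.resolve_right (fun h => h rfl)
        subst hbb
        exact hmem b rfl hs'₁
      | succ k'' =>
        exfalso
        obtain ⟨T₂, _, hs₂⟩ := h₁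
        obtain ⟨s'', _, hR'⟩ := hs₂ _ hs'₁
        rcases s'' with i | x | x <;> exact hR'

end Stmt3

end Stmt3Aux

/-- Reduction of CNF satisfiability to MDL model checking for
the fragment {◇, ∧, dep}.  Worlds: `Sum.inl i = c_i`,
`Sum.inr (Sum.inl (j, k, true)) = u_{j,k+1}`,
`Sum.inr (Sum.inl (j, k, false)) = ū_{j,k+1}` (0-based level `k`),
`Sum.inr (Sum.inr (k, true)) = t_{k+1}`, `Sum.inr (Sum.inr (k, false)) = t̄_{k+1}`.
Atomic propositions: `Sum.inl k = r_k`, `Sum.inr k = p_k`.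
`R` contains `(c_i, u_{j,1})` iff `x_j` occurs positively in `C_i` and
`(c_i, ū_{j,1})` iff it occurs negatively; the chain edges
`(u_{j,k}, u_{j,k+1})` and `(ū_{j,k}, ū_{j,k+1})`; and the edges
`(u_{j,k}, t_k)`, `(ū_{j,k}, t̄_k)` always, plus `(u_{j,k}, t̄_k)`,
`(ū_{j,k}, t_k)` whenever `j ≠ k`.  `π(t_k) = {r_k, p_k}`, `π(t̄_k) = {r_k}`,
`π = ∅` elsewhere.  Then `C₁ ∧ … ∧ C_m` is satisfiable iff
`W, {c₁,…,c_m} ⊨ ◇(⋀_{j=1}^n ◇^j (r_j ∧ dep(;p_j)))`. -/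
theorem stmt3 (m n : ℕ) (C : Fin m → Fin n → Option Bool) :
    CNF.Satisfiable C ↔
      MDL.sat (S := Fin m ⊕ ((Fin n × Fin n × Bool) ⊕ (Fin n × Bool)))
        (fun s s' =>
          match s, s' with
          | Sum.inl i, Sum.inr (Sum.inl (j, k, b)) =>
              (k : ℕ) = 0 ∧ C i j = some b
          | Sum.inr (Sum.inl (j, k, b)), Sum.inr (Sum.inl (j', k', b')) =>
              j = j' ∧ b = b' ∧ (k' : ℕ) = (k : ℕ) + 1
          | Sum.inr (Sum.inl (j, k, b)), Sum.inr (Sum.inr (k', b')) =>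
              k = k' ∧ (b = b' ∨ j ≠ k)
          | _, _ => False)
        (fun s => {a : Fin n ⊕ Fin n |
          match s with
          | Sum.inr (Sum.inr (k, true)) => a = Sum.inl k ∨ a = Sum.inr k
          | Sum.inr (Sum.inr (k, false)) => a = Sum.inl k
          | _ => False})
        (MDL.dia (MDL.bigAnd ((List.finRange n).map fun j : Fin n =>
          MDL.diaIter ((j : ℕ) + 1)
            (MDL.and (MDL.atom (Sum.inl j)) (MDL.dep [] (Sum.inr j))))))
        (Set.range Sum.inl) := by
  
  have hpi : (fun s : Fin m ⊕ ((Fin n × Fin n × Bool) ⊕ (Fin n × Bool)) => {a : Fin n ⊕ Fin n |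
      match s with
      | Sum.inr (Sum.inr (k, true)) => a = Sum.inl k ∨ a = Sum.inr k
      | Sum.inr (Sum.inr (k, false)) => a = Sum.inl k
      | _ => False}) = Stmt3.pi m n := by
    funext s; rcases s with _ | _ | ⟨k, _ | _⟩ <;> rfl
  have hR : (fun s s' : Fin m ⊕ ((Fin n × Fin n × Bool) ⊕ (Fin n × Bool)) =>
      match s, s' with
      | Sum.inl i, Sum.inr (Sum.inl (j, k, b)) =>
          (k : ℕ) = 0 ∧ C i j = some b
      | Sum.inr (Sum.inl (j, k, b)), Sum.inr (Sum.inl (j', k', b')) =>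
          j = j' ∧ b = b' ∧ (k' : ℕ) = (k : ℕ) + 1
      | Sum.inr (Sum.inl (j, k, b)), Sum.inr (Sum.inr (k', b')) =>
          k = k' ∧ (b = b' ∨ j ≠ k)
      | _, _ => False) = Stmt3.R m n C := by
    funext s s'
    rcases s with _ | _ | _ <;> rcases s' with _ | _ | _ <;> rfl
  rw [hpi, hR]
  show CNF.Satisfiable C ↔
    MDL.sat (Stmt3.R m n C) (Stmt3.pi m n)
      (MDL.dia (MDL.bigAnd ((List.finRange n).map fun j : Fin n =>
        MDL.diaIter ((j : ℕ) + 1) (Stmt3.psi n j))))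
      (Set.range Sum.inl)
  constructor
  · rintro ⟨θ, hθ⟩
    rcases Nat.eq_zero_or_pos n with hn | hn
    · subst hn
      refine ⟨∅, ?_, ?_⟩
      · rw [show (List.finRange 0 : List (Fin 0)) = [] from rfl]
        exact trivial
      · rintro s ⟨i, rfl⟩
        obtain ⟨j, _⟩ := hθ i
        exact absurd j.isLt (by omega)
    · refine ⟨Stmt3.lev m n θ ⟨0, hn⟩, ?_, ?_⟩
      · rw [MDL.bigAnd_sat]
        intro φ hφ
        rw [List.mem_map] at hφ
        obtain ⟨j, _, rfl⟩ := hφ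
        exact Stmt3.fwd_chain m n C θ j (j : ℕ) ⟨0, hn⟩ (by simp)
      · rintro s ⟨i, rfl⟩
        obtain ⟨j, hj⟩ := hθ i
        exact ⟨Sum.inr (Sum.inl (j, ⟨0, hn⟩, θ j)), ⟨j, rfl⟩, rfl, hj⟩
  · rintro ⟨T', hbig, hsucc⟩
    rw [MDL.bigAnd_sat] at hbig
    classical
    have hch : ∀ j : Fin n, ∃ F, MDL.sat (Stmt3.R m n C) (Stmt3.pi m n) (Stmt3.psi n j) F ∧
        (∀ (l : Fin n) (b : Bool), Sum.inr (Sum.inl (j, l, b)) ∈ T' →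
          (l : ℕ) + ((j : ℕ) + 1) = (j : ℕ) + 1 → Sum.inr (Sum.inr (j, b)) ∈ F) := by
      intro j
      obtain ⟨F, hF, hmap, _⟩ := Stmt3.bwd_chain m n C j ((j : ℕ) + 1) T'
        (hbig _ (List.mem_map_of_mem (List.mem_finRange j)))
      exact ⟨F, hF, hmap⟩
    choose F hF hmap using hch
    refine ⟨fun j => if ∃ l : Fin n, (l : ℕ) = 0 ∧
      Sum.inr (Sum.inl (j, l, true)) ∈ T' then true else false, ?_⟩
    intro i
    obtain ⟨s', hs', hR⟩ := hsucc (Sum.inl i) ⟨i, rfl⟩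
    rcases s' with i' | ⟨j, l, b⟩ | x
    · exact hR.elim
    · obtain ⟨hl0, hCb⟩ := hR
      refine ⟨j, ?_⟩
      rw [hCb]
      congr 1
      beta_reduce
      cases b with
      | true => rw [if_pos ⟨l, hl0, hs'⟩]
      | false =>
        rw [if_neg]
        rintro ⟨l', hl'0, hmem'⟩
        have ht : Sum.inr (Sum.inr (j, true)) ∈ F j := hmap j l' true hmem' (by omega)
        have hf : Sum.inr (Sum.inr (j, false)) ∈ F j := hmap j l false hs' (by omega)
        have hdep := (hF j).2 _ ht _ hf (by simp)
        have h2 : (Sum.inr j : Fin n ⊕ Fin n) = Sum.inl j := hdep.mp (Or.inr rfl)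
        exact Sum.inr_ne_inl h2
    · exact hR.elim
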